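/- Let u ∈ F and g_u(x) = x^{-1} ∏_{t=0}^∞ (1 + u x^{-2^t}). Then (x+u)(x^2+u)/(x^4-u) is a convergent of g_u: namely ||g_u(x) - (x+u)(x^2+u)/(x^4-u)|| ≤ -9. -/

import Mathlib

open Polynomial
open scoped Classical

noncomputable section

variable {F : Type*} [Field F] [CharZero F]

/-- The infinite product `∏_{t=0}^∞ P(T^{d^t})` (with `T = x⁻¹`), defined coefficientwise
via the stabilizing finite truncated products (valid when `P(0) = 1`). -/
def infProd (P : Polynomial F) (d : ℕ) : PowerSeries F :=
  PowerSeries.mk fun n => (∏ t ∈ Finset.range (n + 1), P.comp (Polynomial.X ^ d ^ t)).coeff n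

/-- The element `x = T⁻¹` of `F((T))`. -/
def xx : LaurentSeries F := ((PowerSeries.X : PowerSeries F) : LaurentSeries F)⁻¹

/-- Evaluation of a polynomial in the variable `x` inside `F((x⁻¹))`. -/
def pev (p : Polynomial F) : LaurentSeries F := Polynomial.aeval (xx : LaurentSeries F) p

/-- Degree valuation `‖f‖` on `F((x⁻¹))`, with `‖0‖ = ⊥`. -/
def degB (f : LaurentSeries F) : WithBot ℤ := if f = 0 then ⊥ else (-(f.order) : ℤ)

/-- `g_u(x) = x⁻¹ ∏_{t=0}^∞ (1 + u x^{-2^t})`. -/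
def gU (u : F) : LaurentSeries F :=
  (xx : LaurentSeries F)⁻¹ *
    ((infProd (1 + Polynomial.C u * Polynomial.X) 2 : PowerSeries F) : LaurentSeries F)

set_option linter.unusedSectionVars false in
lemma trunc_coeff (u : F) (n k : ℕ) (hn : n < 2 ^ k) : ∀ m : ℕ, k ≤ m →
    (∏ t ∈ Finset.range m, (1 + Polynomial.C u * Polynomial.X ^ 2 ^ t)).coeff n =
    (∏ t ∈ Finset.range k, (1 + Polynomial.C u * Polynomial.X ^ 2 ^ t)).coeff n := by
  intro m
  induction m with
  | zero => intro h; interval_cases k; rfl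
  | succ m ih =>
    intro hkm
    rcases Nat.lt_or_ge k (m+1) with h | h
    · have hk : k ≤ m := by omega
      have hnm : n < 2 ^ m := lt_of_lt_of_le hn (Nat.pow_le_pow_right (by norm_num) hk)
      rw [Finset.prod_range_succ, mul_add, mul_one, Polynomial.coeff_add,
        mul_comm _ (Polynomial.C u * Polynomial.X ^ 2 ^ m), mul_assoc, Polynomial.coeff_C_mul,
        mul_comm (Polynomial.X ^ 2 ^ m), Polynomial.coeff_mul_X_pow', if_neg (by omega),
        mul_zero, add_zero]
      exact ih hk
    · have : k = m + 1 := by omega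
      subst this; rfl

lemma coeffP (u : F) (n : ℕ) (hn : n < 8) :
    PowerSeries.coeff n (infProd (1 + Polynomial.C u * Polynomial.X) 2) =
    (∏ t ∈ Finset.range 3, (1 + Polynomial.C u * Polynomial.X ^ 2 ^ t)).coeff n := by
  rw [infProd, PowerSeries.coeff_mk]
  simp only [Polynomial.add_comp, Polynomial.one_comp, Polynomial.mul_comp, Polynomial.C_comp,
    Polynomial.X_comp]
  rcases le_total (n + 1) 3 with h | h
  · exact (trunc_coeff u n (n+1) (lt_of_lt_of_le n.lt_two_pow_self
      (Nat.pow_le_pow_right (by norm_num) (by omega))) 3 h).symm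
  · exact trunc_coeff u n 3 (by omega) (n+1) h

lemma Q3_expand (u : F) :
    (∏ t ∈ Finset.range 3, (1 + Polynomial.C u * Polynomial.X ^ 2 ^ t)) =
    1 + C u * X + C u * X^2 + C (u^2) * X^3 + C u * X^4 + C (u^2) * X^5 + C (u^2) * X^6
      + C (u^3) * X^7 := by
  simp only [Finset.prod_range_succ, Finset.prod_range_zero, one_mul]
  norm_num
  ring

lemma coeffP_val (u : F) :
    (PowerSeries.coeff 0 (infProd (1 + Polynomial.C u * Polynomial.X) 2) = 1) ∧
    (PowerSeries.coeff 1 (infProd (1 + Polynomial.C u * Polynomial.X) 2) = u) ∧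
    (PowerSeries.coeff 2 (infProd (1 + Polynomial.C u * Polynomial.X) 2) = u) ∧
    (PowerSeries.coeff 3 (infProd (1 + Polynomial.C u * Polynomial.X) 2) = u^2) ∧
    (PowerSeries.coeff 4 (infProd (1 + Polynomial.C u * Polynomial.X) 2) = u) ∧
    (PowerSeries.coeff 5 (infProd (1 + Polynomial.C u * Polynomial.X) 2) = u^2) ∧
    (PowerSeries.coeff 6 (infProd (1 + Polynomial.C u * Polynomial.X) 2) = u^2) ∧
    (PowerSeries.coeff 7 (infProd (1 + Polynomial.C u * Polynomial.X) 2) = u^3) := by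
  refine ⟨?_, ?_, ?_, ?_, ?_, ?_, ?_, ?_⟩ <;>
  · rw [coeffP u _ (by norm_num), Q3_expand]
    simp [Polynomial.coeff_add, Polynomial.coeff_C_mul, Polynomial.coeff_X_pow,
      Polynomial.coeff_one, Polynomial.coeff_X, pow_succ, pow_zero, one_mul, mul_assoc]

lemma key_dvd (u : F) : (PowerSeries.X : PowerSeries F) ^ 8 ∣
    (infProd (1 + Polynomial.C u * Polynomial.X) 2) * (1 - PowerSeries.C u * PowerSeries.X ^ 4)
      - (1 + PowerSeries.C u * PowerSeries.X) * (1 + PowerSeries.C u * PowerSeries.X ^ 2) := by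
  rw [PowerSeries.X_pow_dvd_iff]
  intro m hm
  set P := infProd (1 + Polynomial.C u * Polynomial.X) 2 with hP
  have h1 : P * (1 - PowerSeries.C u * PowerSeries.X ^ 4)
      - (1 + PowerSeries.C u * PowerSeries.X) * (1 + PowerSeries.C u * PowerSeries.X ^ 2)
      = P - PowerSeries.C u * (P * PowerSeries.X ^ 4)
        - (1 + PowerSeries.C u * PowerSeries.X + PowerSeries.C u * PowerSeries.X ^ 2
          + PowerSeries.C u * PowerSeries.C u * PowerSeries.X ^ 3) := by ring
  rw [h1]
  obtain ⟨h0, h1', h2, h3, h4, h5, h6, h7⟩ := coeffP_val u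
  rw [PowerSeries.coeff_zero_eq_constantCoeff] at h0
  interval_cases m <;>
    simp [hP, PowerSeries.coeff_mul_X_pow', h0, h1', h2, h3, h4, h5, h6, h7,
      PowerSeries.coeff_X_pow, PowerSeries.coeff_one, PowerSeries.coeff_X, pow_two] <;> ring

/-- `(x+u)(x²+u)/(x⁴-u)` is a convergent of `g_u`:
`‖g_u(x) - (x+u)(x²+u)/(x⁴-u)‖ ≤ -9`. -/
theorem fourth_convergent_gU (u : F) :
    degB (gU u -
        pev ((Polynomial.X + Polynomial.C u) * (Polynomial.X ^ 2 + Polynomial.C u)) /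
          pev (Polynomial.X ^ 4 - Polynomial.C u)) ≤ (((-9 : ℤ)) : WithBot ℤ) := by
  classical
  set e : LaurentSeries F := ((PowerSeries.X : PowerSeries F) : LaurentSeries F) with he_def
  have he : e ≠ 0 := by
    rw [he_def, PowerSeries.coe_X]
    exact HahnSeries.single_ne_zero one_ne_zero
  set c : LaurentSeries F := HahnSeries.C u with hc_def
  -- power series players
  set P : PowerSeries F := infProd (1 + Polynomial.C u * Polynomial.X) 2 with hPdef
  set R : PowerSeries F := 1 - PowerSeries.C u * PowerSeries.X ^ 4 with hRdef
  set Q : PowerSeries F :=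
    (1 + PowerSeries.C u * PowerSeries.X) * (1 + PowerSeries.C u * PowerSeries.X ^ 2)
    with hQdef
  obtain ⟨H, hH⟩ := key_dvd u
  set S : PowerSeries F := R⁻¹ with hSdef
  have hRS : R * S = 1 := by
    apply PowerSeries.mul_inv_cancel
    simp [hRdef]
  -- images
  have hCu : ((PowerSeries.C u : PowerSeries F) : LaurentSeries F) = c := PowerSeries.coe_C u
  have hkey : (P : LaurentSeries F) * (1 - c * e ^ 4)
      = (1 + c * e) * (1 + c * e ^ 2) + e ^ 8 * (H : LaurentSeries F) := by
    have h' : P * R = Q + PowerSeries.X ^ 8 * H := by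
      rw [← hH]; ring
    have := congrArg (fun z : PowerSeries F => (z : LaurentSeries F)) h'
    push_cast at this
    rw [hQdef, hRdef] at this
    push_cast at this
    rw [hCu] at this
    exact this
  have hS1 : (1 - c * e ^ 4) * (S : LaurentSeries F) = 1 := by
    have := congrArg (fun z : PowerSeries F => (z : LaurentSeries F)) hRS
    push_cast at this
    rw [hRdef] at this
    push_cast at this
    rw [hCu] at this
    exact this
  have hRne : (1 - c * e ^ 4) ≠ 0 := left_ne_zero_of_mul_eq_one hS1
  have hSne : (S : LaurentSeries F) ≠ 0 := right_ne_zero_of_mul_eq_one hS1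
  -- evaluations
  have hxx : (xx : LaurentSeries F) = e⁻¹ := rfl
  have hgU : gU u = e * (P : LaurentSeries F) := by
    rw [gU, hxx, inv_inv, hPdef]
  have haM : algebraMap F (LaurentSeries F) u = c := by
    rw [HahnSeries.algebraMap_apply', PowerSeries.algebraMap_apply]
    simp only [Algebra.algebraMap_self, RingHom.id_apply]
    exact hCu
  have hA : pev ((Polynomial.X + Polynomial.C u) * (Polynomial.X ^ 2 + Polynomial.C u))
      = (e⁻¹ + c) * ((e⁻¹) ^ 2 + c) := by
    simp [pev, hxx, haM]
  have hB : pev (Polynomial.X ^ 4 - Polynomial.C u) = (e⁻¹) ^ 4 - c := by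
    simp [pev, hxx, haM]
  have hBalt : (e⁻¹) ^ 4 - c = (1 - c * e ^ 4) / e ^ 4 := by
    field_simp
  have hBne : (e⁻¹) ^ 4 - c ≠ 0 := by
    rw [hBalt]
    exact div_ne_zero hRne (pow_ne_zero _ he)
  set M : PowerSeries F := PowerSeries.X ^ 9 * (H * S) with hMdef
  have hMl : ((M : PowerSeries F) : LaurentSeries F)
      = e ^ 9 * ((H : LaurentSeries F) * (S : LaurentSeries F)) := by
    rw [hMdef]; push_cast; ring
  have hD : gU u -
      pev ((Polynomial.X + Polynomial.C u) * (Polynomial.X ^ 2 + Polynomial.C u)) /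
        pev (Polynomial.X ^ 4 - Polynomial.C u) = ((M : PowerSeries F) : LaurentSeries F) := by
    rw [hgU, hA, hB, hMl]
    have hstep : (e⁻¹ + c) * ((e⁻¹) ^ 2 + c) / ((e⁻¹) ^ 4 - c)
        = e * ((1 + c * e) * (1 + c * e ^ 2)) / (1 - c * e ^ 4) := by
      rw [hBalt]
      field_simp
    rw [hstep]
    have hinv := mul_inv_cancel₀ hRne
    linear_combination (e * (1 - c * e ^ 4)⁻¹) * hkey
      - e ^ 9 * (H : LaurentSeries F) * (1 - c * e ^ 4)⁻¹ * hS1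
      + (e ^ 9 * (H : LaurentSeries F) * (S : LaurentSeries F) - e * (P : LaurentSeries F)) * hinv
  rw [hD, degB]
  split_ifs with h0
  · exact bot_le
  · have h9 : ∀ n : ℤ, n < 9 → ((M : PowerSeries F) : LaurentSeries F).coeff n = 0 := by
      intro n hn
      rw [PowerSeries.coeff_coe]
      split_ifs with hneg
      · rfl
      · push_neg at hneg
        have hdvd : (PowerSeries.X : PowerSeries F) ^ 9 ∣ M := Dvd.intro _ rfl
        exact PowerSeries.X_pow_dvd_iff.mp hdvd n.natAbs (by omega)
    have hord : (9 : ℤ) ≤ ((M : PowerSeries F) : LaurentSeries F).order := by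
      by_contra hlt
      push_neg at hlt
      exact h0 (HahnSeries.coeff_order_eq_zero.mp (h9 _ hlt))
    have : (-((M : PowerSeries F) : LaurentSeries F).order : ℤ) ≤ -9 := by omega
    exact_mod_cast this
end
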